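/- Let κ₀, κ₁ ∈ ℂ be nonzero, put λⱼ = κⱼ², let bⱼ, cⱼ ∈ ℂ, define ηⱼ(x₊, x₋) = x₊/(2λⱼ) − 2λⱼx₋, ψⱼ = cⱼ − (bⱼ/(2κⱼ))e^{ηⱼ}, φⱼ = cⱼ + (bⱼ/(2κⱼ))e^{ηⱼ} for j = 0, 1, and on the open set of points (x₊, x₋) ∈ ℝ² where λ₀φ₁ψ₀ − λ₁φ₀ψ₁ ≠ 0 define r(x₊, x₋) = (λ₀φ₀ψ₁ − λ₁φ₁ψ₀) / (λ₀φ₁ψ₀ − λ₁φ₀ψ₁). Then at every such point, 4·(r·∂₊∂₋r − (∂₊r)·(∂₋r)) = 1 − r⁴, where ∂± denote ∂/∂x±. -/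

import Mathlib

open Matrix Complex

/-- Partial derivative with respect to the first light-cone coordinate `x₊`. -/
noncomputable def dplus (f : ℝ × ℝ → ℂ) (p : ℝ × ℝ) : ℂ :=
  deriv (fun x => f (x, p.2)) p.1

/-- Partial derivative with respect to the second light-cone coordinate `x₋`. -/
noncomputable def dminus (f : ℝ × ℝ → ℂ) (p : ℝ × ℝ) : ℂ :=
  deriv (fun y => f (p.1, y)) p.2

/-- The linear function `ηⱼ(x₊, x₋) = x₊/(2λⱼ) − 2λⱼx₋`. -/
noncomputable def eta (lam : ℂ) (p : ℝ × ℝ) : ℂ :=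
  (p.1 : ℂ) / (2 * lam) - 2 * lam * (p.2 : ℂ)

/-- `ψⱼ = cⱼ − (bⱼ/(2κⱼ))e^{ηⱼ}`. -/
noncomputable def psiB (κ lam b c : ℂ) (p : ℝ × ℝ) : ℂ :=
  c - (b / (2 * κ)) * exp (eta lam p)

/-- `φⱼ = cⱼ + (bⱼ/(2κⱼ))e^{ηⱼ}`. -/
noncomputable def phiB (κ lam b c : ℂ) (p : ℝ × ℝ) : ℂ :=
  c + (b / (2 * κ)) * exp (eta lam p)

/-- The function `r = e^{iu}`, where `u` is the bosonic body of the two-soliton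
solution `s[2]` of the SUSY sine-Gordon equation. -/
noncomputable def rTwoSoliton (κ₀ lam₀ b₀ c₀ κ₁ lam₁ b₁ c₁ : ℂ) (p : ℝ × ℝ) : ℂ :=
  (lam₀ * phiB κ₀ lam₀ b₀ c₀ p * psiB κ₁ lam₁ b₁ c₁ p -
      lam₁ * phiB κ₁ lam₁ b₁ c₁ p * psiB κ₀ lam₀ b₀ c₀ p) /
    (lam₀ * phiB κ₁ lam₁ b₁ c₁ p * psiB κ₀ lam₀ b₀ c₀ p -
      lam₁ * phiB κ₀ lam₀ b₀ c₀ p * psiB κ₁ lam₁ b₁ c₁ p)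

/-! ### Auxiliary machinery for the proof -/

/-- A function of the form `A + B e^{η₀} + C e^{η₁} + F e^{η₀}e^{η₁}`. -/
noncomputable def qf (l0 l1 A B C F : ℂ) (p : ℝ × ℝ) : ℂ :=
  A + B * exp (_root_.eta l0 p) + C * exp (_root_.eta l1 p) +
    F * (exp (_root_.eta l0 p) * exp (_root_.eta l1 p))

lemma continuous_qf (l0 l1 A B C F : ℂ) : Continuous (qf l0 l1 A B C F) := by
  have he : ∀ l : ℂ, Continuous (fun p : ℝ × ℝ => exp (_root_.eta l p)) := by
    intro l
    apply Complex.continuous_exp.comp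
    unfold _root_.eta
    fun_prop
  unfold qf
  continuity

lemma hasDerivAt_exp_eta_x (l : ℂ) (y x : ℝ) :
    HasDerivAt (fun t : ℝ => exp (_root_.eta l (t, y)))
      ((1 / (2 * l)) * exp (_root_.eta l (x, y))) x := by
  have h1 : HasDerivAt (fun t : ℝ => (t : ℂ)) 1 x := by
    simpa using (hasDerivAt_id x).ofReal_comp
  have h2 : HasDerivAt (fun t : ℝ => (t : ℂ) / (2 * l) - 2 * l * (y : ℂ))
      (1 / (2 * l)) x := by
    simpa [one_div] using (h1.div_const (2 * l)).sub_const (2 * l * (y : ℂ))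
  have h3 : (fun t : ℝ => _root_.eta l (t, y)) =
      fun t : ℝ => (t : ℂ) / (2 * l) - 2 * l * (y : ℂ) := by
    funext t; simp [_root_.eta]
  have h4 : HasDerivAt (fun t : ℝ => _root_.eta l (t, y)) (1 / (2 * l)) x := h3 ▸ h2
  have := h4.cexp
  convert this using 1
  ring

lemma hasDerivAt_exp_eta_y (l : ℂ) (x y : ℝ) :
    HasDerivAt (fun t : ℝ => exp (_root_.eta l (x, t)))
      ((-(2 * l)) * exp (_root_.eta l (x, y))) y := by
  have h1 : HasDerivAt (fun t : ℝ => (t : ℂ)) 1 y := by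
    simpa using (hasDerivAt_id y).ofReal_comp
  have h2 : HasDerivAt (fun t : ℝ => (x : ℂ) / (2 * l) - 2 * l * (t : ℂ))
      (-(2 * l)) y := by
    simpa using ((h1.const_mul (2 * l)).const_sub ((x : ℂ) / (2 * l)))
  have h3 : (fun t : ℝ => _root_.eta l (x, t)) =
      fun t : ℝ => (x : ℂ) / (2 * l) - 2 * l * (t : ℂ) := by
    funext t; simp [_root_.eta]
  have h4 : HasDerivAt (fun t : ℝ => _root_.eta l (x, t)) (-(2 * l)) y := h3 ▸ h2
  have := h4.cexp
  convert this using 1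
  ring

lemma hasDerivAt_qf_x (l0 l1 A B C F : ℂ) (y x : ℝ) :
    HasDerivAt (fun t : ℝ => qf l0 l1 A B C F (t, y))
      (qf l0 l1 0 (B * (1 / (2 * l0))) (C * (1 / (2 * l1)))
        (F * (1 / (2 * l0) + 1 / (2 * l1))) (x, y)) x := by
  have h0 := hasDerivAt_exp_eta_x l0 y x
  have h1 := hasDerivAt_exp_eta_x l1 y x
  have h := (((h0.const_mul B).const_add A).add (h1.const_mul C)).add
    ((h0.mul h1).const_mul F)
  have hfun : (fun t : ℝ => qf l0 l1 A B C F (t, y)) =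
      fun t : ℝ => A + B * exp (_root_.eta l0 (t, y)) + C * exp (_root_.eta l1 (t, y)) +
        F * (exp (_root_.eta l0 (t, y)) * exp (_root_.eta l1 (t, y))) := by
    funext t; simp [qf]
  rw [hfun]
  refine h.congr_deriv ?_
  simp only [qf]
  ring

lemma hasDerivAt_qf_y (l0 l1 A B C F : ℂ) (x y : ℝ) :
    HasDerivAt (fun t : ℝ => qf l0 l1 A B C F (x, t))
      (qf l0 l1 0 (B * (-(2 * l0))) (C * (-(2 * l1)))
        (F * (-(2 * l0) + -(2 * l1))) (x, y)) y := by
  have h0 := hasDerivAt_exp_eta_y l0 x y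
  have h1 := hasDerivAt_exp_eta_y l1 x y
  have h := (((h0.const_mul B).const_add A).add (h1.const_mul C)).add
    ((h0.mul h1).const_mul F)
  have hfun : (fun t : ℝ => qf l0 l1 A B C F (x, t)) =
      fun t : ℝ => A + B * exp (_root_.eta l0 (x, t)) + C * exp (_root_.eta l1 (x, t)) +
        F * (exp (_root_.eta l0 (x, t)) * exp (_root_.eta l1 (x, t))) := by
    funext t; simp [qf]
  rw [hfun]
  refine h.congr_deriv ?_
  simp only [qf]
  ring

lemma reduce (n d nx dx ny dy nyx dyx : ℂ) (hd : d ≠ 0)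
    (key : 4 * (d ^ 2 * (n * nyx - nx * ny) - n ^ 2 * (d * dyx - dx * dy)) = d ^ 4 - n ^ 4) :
    4 * (n / d * ((((nyx * d + ny * dx) - (nx * dy + n * dyx)) * d ^ 2 -
          (ny * d - n * dy) * (2 * d * dx)) / (d ^ 2) ^ 2) -
        (nx * d - n * dx) / d ^ 2 * ((ny * d - n * dy) / d ^ 2)) =
      1 - (n / d) ^ 4 := by
  field_simp
  linear_combination key

set_option maxHeartbeats 4000000 in
/-- Master lemma: the sine-Gordon identity for `r = N/D` with
`N = A + B e₀ + C e₁ + F e₀e₁`, `D = A - B e₀ - C e₁ + F e₀e₁`, where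
`A,B,C,F` come from soliton data. -/
lemma master (l0 l1 a0 a1 c0 c1 : ℂ) (h0 : l0 ≠ 0) (h1 : l1 ≠ 0) (p : ℝ × ℝ)
    (A : ℂ) (B : ℂ) (C : ℂ) (F : ℂ)
    (hA : A = (l0 - l1) * (c0 * c1)) (hB : B = (l0 + l1) * (a0 * c1))
    (hC : C = -((l0 + l1) * (a1 * c0))) (hF : F = -((l0 - l1) * (a0 * a1)))
    (hD : qf l0 l1 A (-B) (-C) F p ≠ 0) :
    4 * ((qf l0 l1 A B C F p / qf l0 l1 A (-B) (-C) F p) *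
          dplus (fun q => dminus
            (fun q' => qf l0 l1 A B C F q' / qf l0 l1 A (-B) (-C) F q') q) p -
        dplus (fun q' => qf l0 l1 A B C F q' / qf l0 l1 A (-B) (-C) F q') p *
          dminus (fun q' => qf l0 l1 A B C F q' / qf l0 l1 A (-B) (-C) F q') p) =
      1 - (qf l0 l1 A B C F p / qf l0 l1 A (-B) (-C) F p) ^ 4 := by
  obtain ⟨x, y⟩ := p
  set N : ℝ × ℝ → ℂ := qf l0 l1 A B C F with hN
  set D : ℝ × ℝ → ℂ := qf l0 l1 A (-B) (-C) F with hDdef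
  -- y-derivative coefficient functions
  set Ny : ℝ × ℝ → ℂ :=
    qf l0 l1 0 (B * (-(2 * l0))) (C * (-(2 * l1))) (F * (-(2 * l0) + -(2 * l1))) with hNy
  set Dy : ℝ × ℝ → ℂ :=
    qf l0 l1 0 ((-B) * (-(2 * l0))) ((-C) * (-(2 * l1))) (F * (-(2 * l0) + -(2 * l1))) with hDy
  -- Step A: formula for dminus r at any point where D ≠ 0
  have stepA : ∀ q : ℝ × ℝ, D q ≠ 0 →
      dminus (fun q' => N q' / D q') q = (Ny q * D q - N q * Dy q) / (D q) ^ 2 := by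
    rintro ⟨u, v⟩ hq
    have hn := hasDerivAt_qf_y l0 l1 A B C F u v
    have hd := hasDerivAt_qf_y l0 l1 A (-B) (-C) F u v
    have := (hn.div hd hq).deriv
    simpa [dminus, hN, hDdef, hNy, hDy, Pi.div_def] using this
  -- continuity of D, eventual nonvanishing along horizontal line
  have hDcont : Continuous D := continuous_qf l0 l1 A (-B) (-C) F
  have hline : Continuous (fun t : ℝ => D (t, y)) := hDcont.comp (by fun_prop)
  have hev : ∀ᶠ t in nhds x, D (t, y) ≠ 0 :=
    (hline.continuousAt).eventually_ne hD
  -- Step B: rewrite dplus (dminus r) using the explicit formula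
  have hevEq : (fun t : ℝ => dminus (fun q' => N q' / D q') (t, y)) =ᶠ[nhds x]
      (fun t : ℝ => (Ny (t, y) * D (t, y) - N (t, y) * Dy (t, y)) / (D (t, y)) ^ 2) := by
    filter_upwards [hev] with t ht
    exact stepA (t, y) ht
  have hdd : dplus (fun q => dminus (fun q' => N q' / D q') q) (x, y) =
      deriv (fun t : ℝ =>
        (Ny (t, y) * D (t, y) - N (t, y) * Dy (t, y)) / (D (t, y)) ^ 2) x := by
    unfold dplus
    exact hevEq.deriv_eq
  -- Step C: x-derivatives of all the pieces
  have hNx := hasDerivAt_qf_x l0 l1 A B C F y x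
  have hDx := hasDerivAt_qf_x l0 l1 A (-B) (-C) F y x
  have hNyx := hasDerivAt_qf_x l0 l1 0 (B * (-(2 * l0))) (C * (-(2 * l1)))
    (F * (-(2 * l0) + -(2 * l1))) y x
  have hDyx := hasDerivAt_qf_x l0 l1 0 ((-B) * (-(2 * l0))) ((-C) * (-(2 * l1)))
    (F * (-(2 * l0) + -(2 * l1))) y x
  have hb0 : B * (-(2 * l0)) * (1 / (2 * l0)) = -B := by field_simp
  have hb1 : C * (-(2 * l1)) * (1 / (2 * l1)) = -C := by field_simp
  have hb2 : (-B) * (-(2 * l0)) * (1 / (2 * l0)) = B := by field_simp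
  have hb3 : (-C) * (-(2 * l1)) * (1 / (2 * l1)) = C := by field_simp
  rw [hb0, hb1] at hNyx
  rw [hb2, hb3] at hDyx
  set Nx := qf l0 l1 0 (B * (1 / (2 * l0))) (C * (1 / (2 * l1)))
    (F * (1 / (2 * l0) + 1 / (2 * l1))) (x, y) with hNxv
  set Dx := qf l0 l1 0 ((-B) * (1 / (2 * l0))) ((-C) * (1 / (2 * l1)))
    (F * (1 / (2 * l0) + 1 / (2 * l1))) (x, y) with hDxv
  set Nyx := qf l0 l1 0 (-B) (-C)
    (F * (-(2 * l0) + -(2 * l1)) * (1 / (2 * l0) + 1 / (2 * l1))) (x, y) with hNyxv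
  set Dyx := qf l0 l1 0 B C
    (F * (-(2 * l0) + -(2 * l1)) * (1 / (2 * l0) + 1 / (2 * l1))) (x, y) with hDyxv
  -- numerator and denominator of the formula in Step B
  have hnum : HasDerivAt (fun t : ℝ => Ny (t, y) * D (t, y) - N (t, y) * Dy (t, y))
      ((Nyx * D (x, y) + Ny (x, y) * Dx) - (Nx * Dy (x, y) + N (x, y) * Dyx)) x :=
    (hNyx.mul hDx).sub (hNx.mul hDyx)
  have hden2 : HasDerivAt (fun t : ℝ => (D (t, y)) ^ 2)
      (2 * D (x, y) * Dx) x := by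
    have h := hDx.mul hDx
    have he : (fun t : ℝ => (D (t, y)) ^ 2) = fun t => D (t, y) * D (t, y) := by
      funext t; ring
    rw [he]
    refine h.congr_deriv ?_
    ring
  have hD2ne : (D (x, y)) ^ 2 ≠ 0 := pow_ne_zero 2 hD
  have hdd2 : deriv (fun t : ℝ =>
        (Ny (t, y) * D (t, y) - N (t, y) * Dy (t, y)) / (D (t, y)) ^ 2) x =
      (((Nyx * D (x, y) + Ny (x, y) * Dx) - (Nx * Dy (x, y) + N (x, y) * Dyx)) * (D (x, y)) ^ 2 -
        (Ny (x, y) * D (x, y) - N (x, y) * Dy (x, y)) * (2 * D (x, y) * Dx)) /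
      ((D (x, y)) ^ 2) ^ 2 :=
    (hnum.div hden2 hD2ne).deriv
  -- Step D: first derivatives of r
  have hdp : dplus (fun q' => N q' / D q') (x, y) =
      (Nx * D (x, y) - N (x, y) * Dx) / (D (x, y)) ^ 2 := by
    unfold dplus
    exact (hNx.div hDx hD).deriv
  have hdm : dminus (fun q' => N q' / D q') (x, y) =
      (Ny (x, y) * D (x, y) - N (x, y) * Dy (x, y)) / (D (x, y)) ^ 2 :=
    stepA (x, y) hD
  -- assemble
  rw [hdd, hdd2, hdp, hdm]
  have key : 4 * ((D (x, y)) ^ 2 * (N (x, y) * Nyx - Nx * Ny (x, y)) -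
      (N (x, y)) ^ 2 * (D (x, y) * Dyx - Dx * Dy (x, y))) =
      (D (x, y)) ^ 4 - (N (x, y)) ^ 4 := by
    simp only [hN, hDdef, hNy, hDy, hNxv, hDxv, hNyxv, hDyxv, qf]
    subst hA hB hC hF
    field_simp
    ring
  exact reduce (N (x, y)) (D (x, y)) Nx Dx (Ny (x, y)) (Dy (x, y)) Nyx Dyx hD key

/-- on the set where the denominator of the two-soliton `r` is nonzero,
`4(r·∂₊∂₋r − ∂₊r·∂₋r) = 1 − r⁴`, i.e. `u = −i log r` solves
`∂₊∂₋u = −(1/2)sin(2u)`. -/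
theorem twoSoliton_solves_sineGordon (κ₀ κ₁ lam₀ lam₁ b₀ c₀ b₁ c₁ : ℂ)
    (hκ₀ : κ₀ ≠ 0) (hκ₁ : κ₁ ≠ 0) (hlam₀ : lam₀ = κ₀ ^ 2) (hlam₁ : lam₁ = κ₁ ^ 2)
    (p : ℝ × ℝ)
    (hden : lam₀ * phiB κ₁ lam₁ b₁ c₁ p * psiB κ₀ lam₀ b₀ c₀ p -
        lam₁ * phiB κ₀ lam₀ b₀ c₀ p * psiB κ₁ lam₁ b₁ c₁ p ≠ 0) :
    4 * (rTwoSoliton κ₀ lam₀ b₀ c₀ κ₁ lam₁ b₁ c₁ p *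
          dplus (fun q => dminus (rTwoSoliton κ₀ lam₀ b₀ c₀ κ₁ lam₁ b₁ c₁) q) p -
        dplus (rTwoSoliton κ₀ lam₀ b₀ c₀ κ₁ lam₁ b₁ c₁) p *
          dminus (rTwoSoliton κ₀ lam₀ b₀ c₀ κ₁ lam₁ b₁ c₁) p) =
      1 - (rTwoSoliton κ₀ lam₀ b₀ c₀ κ₁ lam₁ b₁ c₁ p) ^ 4 := by
  have hl0 : lam₀ ≠ 0 := by rw [hlam₀]; exact pow_ne_zero 2 hκ₀
  have hl1 : lam₁ ≠ 0 := by rw [hlam₁]; exact pow_ne_zero 2 hκ₁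
  set a0 : ℂ := b₀ / (2 * κ₀) with ha0
  set a1 : ℂ := b₁ / (2 * κ₁) with ha1
  set A : ℂ := (lam₀ - lam₁) * (c₀ * c₁) with hA
  set B : ℂ := (lam₀ + lam₁) * (a0 * c₁) with hB
  set C : ℂ := -((lam₀ + lam₁) * (a1 * c₀)) with hC
  set F : ℂ := -((lam₀ - lam₁) * (a0 * a1)) with hF
  have hNeq : ∀ q : ℝ × ℝ,
      lam₀ * phiB κ₀ lam₀ b₀ c₀ q * psiB κ₁ lam₁ b₁ c₁ q -
        lam₁ * phiB κ₁ lam₁ b₁ c₁ q * psiB κ₀ lam₀ b₀ c₀ q =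
      qf lam₀ lam₁ A B C F q := by
    intro q
    simp only [phiB, psiB, qf, hA, hB, hC, hF, ha0, ha1]
    ring
  have hDeq : ∀ q : ℝ × ℝ,
      lam₀ * phiB κ₁ lam₁ b₁ c₁ q * psiB κ₀ lam₀ b₀ c₀ q -
        lam₁ * phiB κ₀ lam₀ b₀ c₀ q * psiB κ₁ lam₁ b₁ c₁ q =
      qf lam₀ lam₁ A (-B) (-C) F q := by
    intro q
    simp only [phiB, psiB, qf, hA, hB, hC, hF, ha0, ha1]
    ring
  have hr : rTwoSoliton κ₀ lam₀ b₀ c₀ κ₁ lam₁ b₁ c₁ =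
      fun q => qf lam₀ lam₁ A B C F q / qf lam₀ lam₁ A (-B) (-C) F q := by
    funext q
    rw [rTwoSoliton, hNeq q, hDeq q]
  have hD : qf lam₀ lam₁ A (-B) (-C) F p ≠ 0 := by
    rw [← hDeq p]; exact hden
  rw [hr]
  exact master lam₀ lam₁ a0 a1 c₀ c₁ hl0 hl1 p A B C F hA hB hC hF hD
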